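/- Let h : (0,∞) → ℂ be measurable with t ↦ e^{-Mt} h(t) integrable on (0,∞) for some M > 0. If there exists s₀ > M such that ∫₀^∞ e^{-st} h(t) dt = 0 for every real s ≥ s₀, then h(t) = 0 for almost every t > 0. (Injectivity of the Laplace transform on exponentially weighted L¹, used to prove uniqueness in Proposition up2 and Corollary uc1.) -/

import Mathlib

open MeasureTheory Real Set

/-- Integrability of a bounded continuous multiplier against an integrable function. -/
lemma laplace_aux_int (g : ℝ → ℂ) (hgint : IntegrableOn g (Set.Ioi 0))
    (F : ℝ → ℝ) (hF : ContinuousOn F (Set.Ioi 0)) (C : ℝ)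
    (hC : ∀ t ∈ Set.Ioi (0:ℝ), |F t| ≤ C) :
    IntegrableOn (fun t => F t • g t) (Set.Ioi 0) := by
  have hmeas : AEStronglyMeasurable (fun t => F t • g t) (volume.restrict (Set.Ioi 0)) :=
    (hF.aestronglyMeasurable measurableSet_Ioi).smul hgint.aestronglyMeasurable
  refine Integrable.mono (hgint.norm.smul C) hmeas ?_
  rw [ae_restrict_iff' measurableSet_Ioi]
  filter_upwards with t ht
  simp only [norm_smul, Real.norm_eq_abs, norm_norm]
  have h1 : |F t| ≤ C := hC t ht
  have h2 : C ≤ |C| := le_abs_self C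
  have := norm_nonneg (g t)
  calc |F t| * ‖g t‖ ≤ |C| * ‖g t‖ := by
        exact mul_le_mul_of_nonneg_right (h1.trans h2) (norm_nonneg _)
    _ = ‖C • ‖g t‖‖ := by simp [norm_smul, abs_mul, abs_of_nonneg (norm_nonneg (g t))]

lemma laplace_aux_eps {I : ℂ} {B : ℝ} (hB : 0 ≤ B)
    (key : ∀ ε : ℝ, 0 < ε → ‖I‖ ≤ ε * B) : I = 0 := by
  by_contra hne
  have hpos : 0 < ‖I‖ := norm_pos_iff.mpr hne
  have h2 := key (‖I‖ / (2 * (B + 1))) (by positivity)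
  rw [div_mul_eq_mul_div, le_div_iff₀ (by positivity)] at h2
  nlinarith

/-- If all "moments" `∫ e^{-nt} g t` vanish, then integrals against any continuous test
function of `e^{-t}` vanish. -/
lemma laplace_aux_cont (g : ℝ → ℂ) (hgint : IntegrableOn g (Set.Ioi 0))
    (hzero : ∀ n : ℕ, ∫ t in Set.Ioi (0:ℝ), Real.exp (-(n:ℝ) * t) • g t = 0)
    (f : ℝ → ℝ) (hf : ContinuousOn f (Set.Icc 0 1)) :
    ∫ t in Set.Ioi (0:ℝ), f (Real.exp (-t)) • g t = 0 := by
  have hmap : ∀ t ∈ Set.Ioi (0:ℝ), Real.exp (-t) ∈ Set.Icc (0:ℝ) 1 := by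
    intro t ht
    exact ⟨(Real.exp_pos _).le, Real.exp_le_one_iff.mpr (by simp only [mem_Ioi] at ht; linarith)⟩
  -- integrability of continuous-on-[0,1] composition against g
  have hcomp_int : ∀ (F : ℝ → ℝ), ContinuousOn F (Set.Icc 0 1) →
      IntegrableOn (fun t => F (Real.exp (-t)) • g t) (Set.Ioi 0) := by
    intro F hF
    obtain ⟨C, hC⟩ := isCompact_Icc.exists_bound_of_continuousOn hF
    refine laplace_aux_int g hgint _ ?_ C ?_
    · exact hF.comp ((Real.continuous_exp.comp continuous_neg).continuousOn) hmap
    · intro t ht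
      simpa using hC _ (hmap t ht)
  -- polynomial case
  have hpoly : ∀ p : Polynomial ℝ,
      ∫ t in Set.Ioi (0:ℝ), Polynomial.eval (Real.exp (-t)) p • g t = 0 := by
    intro p
    have expand : ∀ t ∈ Set.Ioi (0:ℝ), Polynomial.eval (Real.exp (-t)) p • g t
        = ∑ i ∈ Finset.range (p.natDegree + 1),
            p.coeff i • (Real.exp (-(i:ℝ) * t) • g t) := by
      intro t _
      rw [Polynomial.eval_eq_sum_range, Finset.sum_smul]
      refine Finset.sum_congr rfl fun i _ => ?_
      have hx : Real.exp (-t) ^ i = Real.exp (-(i:ℝ) * t) := by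
        rw [← Real.exp_nat_mul]; congr 1; ring
      rw [hx, mul_smul]
    rw [setIntegral_congr_fun measurableSet_Ioi expand, integral_finset_sum]
    · refine Finset.sum_eq_zero fun i _ => ?_
      rw [integral_smul, hzero i, smul_zero]
    · intro i _
      refine Integrable.smul (p.coeff i) ?_
      refine laplace_aux_int g hgint _ ?_ 1 ?_
      · exact (Real.continuous_exp.comp (by continuity)).continuousOn
      · intro t ht
        simp only [mem_Ioi] at ht
        rw [abs_of_pos (Real.exp_pos _)]
        apply Real.exp_le_one_iff.mpr
        have : (0:ℝ) ≤ (i:ℝ) := Nat.cast_nonneg i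
        nlinarith
  -- epsilon argument
  have hBnn : 0 ≤ ∫ t in Set.Ioi (0:ℝ), ‖g t‖ := integral_nonneg fun t => norm_nonneg _
  refine laplace_aux_eps hBnn ?_
  intro ε hε
  obtain ⟨p, hp⟩ := exists_polynomial_near_of_continuousOn 0 1 f hf ε hε
  have hfint := hcomp_int f hf
  have hpint := hcomp_int (fun x => Polynomial.eval x p)
    (Polynomial.continuous_aeval p).continuousOn
  have hsub : (∫ t in Set.Ioi (0:ℝ), f (Real.exp (-t)) • g t) = ∫ t in Set.Ioi (0:ℝ),
      (f (Real.exp (-t)) - Polynomial.eval (Real.exp (-t)) p) • g t := by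
    rw [← sub_zero (∫ t in Set.Ioi (0:ℝ), f (Real.exp (-t)) • g t),
      ← hpoly p, ← integral_sub hfint hpint]
    refine setIntegral_congr_fun measurableSet_Ioi fun t _ => ?_
    rw [sub_smul]
  rw [hsub]
  have hbound : ∀ᵐ t ∂(volume.restrict (Set.Ioi (0:ℝ))),
      ‖(f (Real.exp (-t)) - Polynomial.eval (Real.exp (-t)) p) • g t‖ ≤ ε * ‖g t‖ := by
    rw [ae_restrict_iff' measurableSet_Ioi]
    filter_upwards with t ht
    rw [norm_smul, Real.norm_eq_abs]
    have := hp _ (hmap t ht)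
    rw [abs_sub_comm] at this
    exact mul_le_mul_of_nonneg_right this.le (norm_nonneg _)
  refine le_trans (norm_integral_le_of_norm_le (hgint.norm.const_mul ε) hbound) ?_
  rw [integral_const_mul]

theorem laplace_injective (h : ℝ → ℂ) (hmeas : Measurable h) (M : ℝ) (hM : 0 < M)
    (hint : IntegrableOn (fun t => Real.exp (-M * t) • h t) (Set.Ioi 0))
    (hvanish : ∃ s₀ : ℝ, M < s₀ ∧ ∀ s : ℝ, s₀ ≤ s →
      ∫ t in Set.Ioi (0 : ℝ), Complex.exp (-(s : ℂ) * t) * h t = 0) :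
    ∀ᵐ t ∂(volume.restrict (Set.Ioi (0 : ℝ))), h t = 0 := by
  obtain ⟨s₀, hs₀, hvan⟩ := hvanish
  set g : ℝ → ℂ := fun t => Real.exp (-s₀ * t) • h t with hg
  -- g is integrable on (0, ∞)
  have hgmeas : Measurable g :=
    ((Real.measurable_exp.comp (measurable_const.mul measurable_id))).smul hmeas
  have hgint : IntegrableOn g (Set.Ioi 0) := by
    refine Integrable.mono hint hgmeas.aestronglyMeasurable ?_
    rw [ae_restrict_iff' measurableSet_Ioi]
    filter_upwards with t ht
    simp only [mem_Ioi] at ht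
    simp only [hg, norm_smul, Real.norm_eq_abs, abs_of_pos (Real.exp_pos _)]
    have : Real.exp (-s₀ * t) ≤ Real.exp (-M * t) :=
      Real.exp_le_exp.mpr (by nlinarith)
    exact mul_le_mul_of_nonneg_right this (norm_nonneg _)
  -- moments vanish
  have hzero : ∀ n : ℕ, ∫ t in Set.Ioi (0:ℝ), Real.exp (-(n:ℝ) * t) • g t = 0 := by
    intro n
    have hv := hvan (s₀ + n) (le_add_of_nonneg_right (Nat.cast_nonneg n))
    rw [← hv]
    refine setIntegral_congr_fun measurableSet_Ioi fun t _ => ?_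
    show Real.exp (-(n:ℝ) * t) • (Real.exp (-s₀ * t) • h t)
        = Complex.exp (-(((s₀ + (n:ℝ)) : ℝ) : ℂ) * (t:ℂ)) * h t
    have harg : (-(((s₀ + (n:ℝ)) : ℝ) : ℂ) * (t:ℂ)) = ((-(s₀ + (n:ℝ)) * t : ℝ) : ℂ) := by
      push_cast; ring
    rw [smul_smul, ← Real.exp_add,
      show (-(n:ℝ) * t + -s₀ * t) = (-(s₀ + (n:ℝ)) * t) by ring,
      Complex.real_smul]
    congr 1
    rw [Complex.ofReal_exp, ← harg]
  -- conclude g = 0 a.e. on (0, ∞) using smooth test functions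
  have hae : ∀ᵐ x ∂(volume : Measure ℝ), x ∈ Set.Ioi (0:ℝ) → g x = 0 := by
    refine isOpen_Ioi.ae_eq_zero_of_integral_contDiff_smul_eq_zero
      hgint.locallyIntegrableOn ?_
    intro φ hφ hφc hφsupp
    -- φ vanishes outside (0, ∞), in fact outside a compact of (0, ∞)
    have hφ0 : ∀ x, x ∉ Set.Ioi (0:ℝ) → φ x = 0 := fun x hx =>
      image_eq_zero_of_notMem_tsupport (fun hmem => hx (hφsupp hmem))
    rw [← setIntegral_eq_integral_of_forall_compl_eq_zero
      (fun x hx => by rw [hφ0 x hx, zero_smul])]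
    -- bound the support: get R with tsupport φ ⊆ closedBall 0 R
    obtain ⟨R, hR⟩ := hφc.isBounded.subset_closedBall 0
    set δ : ℝ := Real.exp (-(|R| + 1)) with hδ
    have hδpos : 0 < δ := Real.exp_pos _
    -- the test function on [0,1]
    set f : ℝ → ℝ := fun x => φ (-Real.log x) with hf
    have hfzero : ∀ x ∈ Set.Ico (0:ℝ) δ, f x = 0 := by
      intro x hx
      obtain ⟨hx0, hxδ⟩ := hx
      rcases eq_or_lt_of_le hx0 with rfl | hx0'
      · simp only [hf, Real.log_zero, neg_zero]
        exact hφ0 0 (by simp)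
      · have hlog : Real.log x < -(|R| + 1) := by
          rw [Real.log_lt_iff_lt_exp hx0']
          exact hxδ
        show φ (-Real.log x) = 0
        refine image_eq_zero_of_notMem_tsupport fun hmem => ?_
        have := hR hmem
        simp only [Metric.mem_closedBall, Real.dist_eq, sub_zero] at this
        have h1 : |R| + 1 < -Real.log x := by linarith
        have h2 : |(-Real.log x)| = -Real.log x :=
          abs_of_pos (by have := abs_nonneg R; linarith)
        rw [h2] at this
        have := le_abs_self R
        linarith
    have hfcont : ContinuousOn f (Set.Icc 0 1) := by
      intro x hx
      rcases lt_or_ge x δ with hxδ | hxδ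
      · -- near 0 the function is eventually 0
        have hev : ∀ᶠ y in nhdsWithin x (Set.Icc (0:ℝ) 1), f y = 0 := by
          have h1 : Set.Iio δ ∈ nhdsWithin x (Set.Icc (0:ℝ) 1) :=
            nhdsWithin_le_nhds (Iio_mem_nhds hxδ)
          filter_upwards [h1, self_mem_nhdsWithin] with y hy1 hy2
          exact hfzero y ⟨hy2.1, hy1⟩
        have hx0 : f x = 0 := hfzero x ⟨hx.1, hxδ⟩
        refine (continuousWithinAt_const (b := (0:ℝ))).congr_of_eventuallyEq ?_ hx0
        exact hev
      · have hx0 : 0 < x := lt_of_lt_of_le hδpos hxδ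
        refine ContinuousAt.continuousWithinAt ?_
        exact (hφ.continuous.continuousAt).comp
          ((Real.continuousAt_log hx0.ne').neg)
    have hcomp : ∀ t ∈ Set.Ioi (0:ℝ), f (Real.exp (-t)) = φ t := by
      intro t _
      simp only [hf, Real.log_exp, neg_neg]
    rw [setIntegral_congr_fun measurableSet_Ioi
      (fun t ht => by rw [← hcomp t ht])]
    exact laplace_aux_cont g hgint hzero f hfcont
  -- transfer to h
  rw [ae_restrict_iff' measurableSet_Ioi]
  filter_upwards [hae] with t ht hmem
  have hgt := ht hmem
  simp only [hg, smul_eq_zero] at hgt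
  rcases hgt with h1 | h2
  · exact absurd h1 (Real.exp_ne_zero _)
  · exact h2
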